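/- Let ξ₁, …, ξ₄ ∈ ℂ² be unit spinors, let n_b ∈ ℝ³ have components (n_b)ᵢ = ⟨ξ_b, σᵢ ξ_b⟩, and let p, k : Fin 4 → ℝ. Then the following are equivalent: (i) for every traceless matrix L ∈ M₂(ℂ), Σ_b [ i p_b (⟨ξ_b, L ξ_b⟩ + ⟨ξ_b, Lᴴ ξ_b⟩) + k_b (⟨ξ_b, Lᴴ ξ_b⟩ − ⟨ξ_b, L ξ_b⟩) ] = 0; (ii) Σ_b p_b n_b = 0 and Σ_b k_b n_b = 0. -/

import Mathlib

open Matrix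

noncomputable section

/-- Pauli matrix σ₁. -/
def σ1 : Matrix (Fin 2) (Fin 2) ℂ := !![0, 1; 1, 0]
/-- Pauli matrix σ₂. -/
def σ2 : Matrix (Fin 2) (Fin 2) ℂ := !![0, -Complex.I; Complex.I, 0]
/-- Pauli matrix σ₃. -/
def σ3 : Matrix (Fin 2) (Fin 2) ℂ := !![1, 0; 0, -1]

/-- The triple of Pauli matrices. -/
def pauli : Fin 3 → Matrix (Fin 2) (Fin 2) ℂ := ![σ1, σ2, σ3]

/-- σ·a = a₁σ₁ + a₂σ₂ + a₃σ₃ for a ∈ ℝ³. -/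
def sigmaDot (a : Fin 3 → ℝ) : Matrix (Fin 2) (Fin 2) ℂ := ∑ i, (a i : ℂ) • pauli i

/-- The Hermitian inner product ⟨z,w⟩ = z̄₀w₀ + z̄₁w₁ on ℂ², conjugate-linear in the
first argument. -/
def herm (z w : Fin 2 → ℂ) : ℂ := star (z 0) * w 0 + star (z 1) * w 1

/-- The antilinear map J(z₀,z₁) = (−z̄₁, z̄₀) on ℂ². -/
def Jmap (z : Fin 2 → ℂ) : Fin 2 → ℂ := ![-(star (z 1)), star (z 0)]

/-- The matrix ε = [[0,−1],[1,0]]. -/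
def eps : Matrix (Fin 2) (Fin 2) ℂ := !![0, -1; 1, 0]

lemma hermAdjoint (L : Matrix (Fin 2) (Fin 2) ℂ) (z : Fin 2 → ℂ) :
    herm z (Lᴴ.mulVec z) = star (herm z (L.mulVec z)) := by
  simp [herm, Matrix.mulVec, dotProduct, Fin.sum_univ_two, Matrix.conjTranspose_apply]
  ring

lemma pauliHerm (i : Fin 3) : (pauli i)ᴴ = pauli i := by
  fin_cases i <;> ext a b <;> fin_cases a <;> fin_cases b <;>
    simp [pauli, σ1, σ2, σ3, Matrix.conjTranspose_apply]

lemma ptrace (i : Fin 3) : (pauli i).trace = 0 := by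
  fin_cases i <;> simp [pauli, σ1, σ2, σ3, Matrix.trace, Fin.sum_univ_two]

lemma nim (z : Fin 2 → ℂ) (i : Fin 3) : (herm z ((pauli i).mulVec z)).im = 0 := by
  have h : (starRingEnd ℂ) (herm z ((pauli i).mulVec z)) = herm z ((pauli i).mulVec z) := by
    rw [Complex.star_def.symm, ← hermAdjoint, pauliHerm]
  exact Complex.conj_eq_iff_im.mp h

lemma nreal (z : Fin 2 → ℂ) (i : Fin 3) :
    ((herm z ((pauli i).mulVec z)).re : ℂ) = herm z ((pauli i).mulVec z) := by
  have := nim z i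
  exact Complex.ext (by simp) (by simp only [Complex.ofReal_im]; exact this.symm)

lemma herm_smul (c : ℂ) (z v : Fin 2 → ℂ) : herm z (c • v) = c * herm z v := by
  simp [herm, Pi.smul_apply, smul_eq_mul]; ring


lemma hermP0 (z : Fin 2 → ℂ) : herm z ((pauli 0).mulVec z)
    = star (z 0) * z 1 + star (z 1) * z 0 := by
  simp [herm, pauli, σ1, Matrix.mulVec, dotProduct, Fin.sum_univ_two]

lemma hermP1 (z : Fin 2 → ℂ) : herm z ((pauli 1).mulVec z)
    = -Complex.I * (star (z 0) * z 1) + Complex.I * (star (z 1) * z 0) := by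
  simp [herm, pauli, σ2, Matrix.mulVec, dotProduct, Fin.sum_univ_two]; ring

lemma hermP2 (z : Fin 2 → ℂ) : herm z ((pauli 2).mulVec z)
    = star (z 0) * z 0 - star (z 1) * z 1 := by
  simp [herm, pauli, σ3, Matrix.mulVec, dotProduct, Fin.sum_univ_two]; ring

lemma hermL (L : Matrix (Fin 2) (Fin 2) ℂ) (z : Fin 2 → ℂ) : herm z (L.mulVec z)
    = star (z 0) * (L 0 0 * z 0 + L 0 1 * z 1) + star (z 1) * (L 1 0 * z 0 + L 1 1 * z 1) := by
  simp [herm, Matrix.mulVec, dotProduct, Fin.sum_univ_two]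

set_option maxRecDepth 40000 in
/-- Stationarity with respect to a group variable is equivalent to the pair of
closure conditions. -/
theorem stmt14 (ξ : Fin 4 → Fin 2 → ℂ) (hξ : ∀ b, herm (ξ b) (ξ b) = 1)
    (p k : Fin 4 → ℝ) :
    (∀ L : Matrix (Fin 2) (Fin 2) ℂ, L.trace = 0 →
      ∑ b : Fin 4,
        (Complex.I * (p b : ℂ) *
            (herm (ξ b) (L.mulVec (ξ b)) + herm (ξ b) (Lᴴ.mulVec (ξ b)))
          + (k b : ℂ) *
            (herm (ξ b) (Lᴴ.mulVec (ξ b)) - herm (ξ b) (L.mulVec (ξ b)))) = 0)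
    ↔ ((∑ b : Fin 4, p b • (fun i => (herm (ξ b) ((pauli i).mulVec (ξ b))).re))
          = (0 : Fin 3 → ℝ) ∧
       (∑ b : Fin 4, k b • (fun i => (herm (ξ b) ((pauli i).mulVec (ξ b))).re))
          = (0 : Fin 3 → ℝ)) := by
  constructor
  · intro H
    constructor
    · funext i
      simp only [Finset.sum_apply, Pi.smul_apply, smul_eq_mul, Pi.zero_apply]
      have h := H (pauli i) (ptrace i)
      rw [pauliHerm] at h
      have h2 : (2 * Complex.I) * ∑ b : Fin 4,
          (p b : ℂ) * herm (ξ b) ((pauli i).mulVec (ξ b)) = 0 := by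
        rw [Finset.mul_sum, ← h]
        exact Finset.sum_congr rfl fun b _ => by ring
      have h3 := (mul_eq_zero.mp h2).resolve_left
        (mul_ne_zero two_ne_zero Complex.I_ne_zero)
      have h4 := congrArg Complex.re h3
      simpa [Complex.re_sum, Complex.mul_re, nim] using h4
    · funext i
      simp only [Finset.sum_apply, Pi.smul_apply, smul_eq_mul, Pi.zero_apply]
      have htr : (Complex.I • pauli i).trace = 0 := by
        rw [Matrix.trace_smul, ptrace]; simp
      have h := H (Complex.I • pauli i) htr
      have hconj : (Complex.I • pauli i)ᴴ = (-Complex.I) • pauli i := by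
        rw [Matrix.conjTranspose_smul, pauliHerm]
        simp [Complex.star_def, Complex.conj_I]
      rw [hconj] at h
      have h2 : (-2 * Complex.I) * ∑ b : Fin 4,
          (k b : ℂ) * herm (ξ b) ((pauli i).mulVec (ξ b)) = 0 := by
        rw [Finset.mul_sum, ← h]
        refine Finset.sum_congr rfl fun b _ => ?_
        rw [Matrix.smul_mulVec, Matrix.smul_mulVec, herm_smul, herm_smul]
        ring
      have h3 := (mul_eq_zero.mp h2).resolve_left
        (by simpa using mul_ne_zero (two_ne_zero (α := ℂ)) Complex.I_ne_zero)
      have h4 := congrArg Complex.re h3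
      simpa [Complex.re_sum, Complex.mul_re, nim] using h4
  · rintro ⟨h1, h2⟩ L hL
    have h11 : L 1 1 = -(L 0 0) := by
      simp [Matrix.trace, Fin.sum_univ_two, Matrix.diag] at hL
      linear_combination hL
    have hp : ∀ i : Fin 3,
        ∑ b : Fin 4, (p b : ℂ) * herm (ξ b) ((pauli i).mulVec (ξ b)) = 0 := by
      intro i
      have h := congrFun h1 i
      simp only [Finset.sum_apply, Pi.smul_apply, smul_eq_mul, Pi.zero_apply] at h
      calc ∑ b : Fin 4, (p b : ℂ) * herm (ξ b) ((pauli i).mulVec (ξ b))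
          = ((∑ b : Fin 4, p b * (herm (ξ b) ((pauli i).mulVec (ξ b))).re : ℝ) : ℂ) := by
            push_cast
            exact Finset.sum_congr rfl fun b _ => by rw [nreal]
        _ = 0 := by rw [h]; simp
    have hk : ∀ i : Fin 3,
        ∑ b : Fin 4, (k b : ℂ) * herm (ξ b) ((pauli i).mulVec (ξ b)) = 0 := by
      intro i
      have h := congrFun h2 i
      simp only [Finset.sum_apply, Pi.smul_apply, smul_eq_mul, Pi.zero_apply] at h
      calc ∑ b : Fin 4, (k b : ℂ) * herm (ξ b) ((pauli i).mulVec (ξ b))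
          = ((∑ b : Fin 4, k b * (herm (ξ b) ((pauli i).mulVec (ξ b))).re : ℝ) : ℂ) := by
            push_cast
            exact Finset.sum_congr rfl fun b _ => by rw [nreal]
        _ = 0 := by rw [h]; simp
    have hp0 := hp 0; have hp1 := hp 1; have hp2 := hp 2
    have hk0 := hk 0; have hk1 := hk 1; have hk2 := hk 2
    simp only [hermAdjoint]
    rw [Fin.sum_univ_four]
    rw [Fin.sum_univ_four] at hp0 hp1 hp2 hk0 hk1 hk2
    simp only [hermP0] at hp0 hk0
    simp only [hermP1] at hp1 hk1
    simp only [hermP2] at hp2 hk2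
    simp only [hermL]
    rw [h11]
    simp only [star_add, StarMul.star_mul, star_neg, star_star]
    linear_combination
      (Complex.I * ((L 0 1 + L 1 0)/2 + (star (L 0 1) + star (L 1 0))/2)) * hp0 +
      (Complex.I * (Complex.I * (L 0 1 - L 1 0)/2 +
        (-Complex.I) * (star (L 0 1) - star (L 1 0))/2)) * hp1 +
      (Complex.I * (L 0 0 + star (L 0 0))) * hp2 +
      ((star (L 0 1) + star (L 1 0))/2 - (L 0 1 + L 1 0)/2) * hk0 +
      ((-Complex.I) * (star (L 0 1) - star (L 1 0))/2 -
        Complex.I * (L 0 1 - L 1 0)/2) * hk1 +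
      (star (L 0 0) - L 0 0) * hk2 +
      (Complex.I * ((L 0 1 - L 1 0)/2 - (star (L 0 1) - star (L 1 0))/2) *
          (↑(p 0) * (star (ξ 0 0) * ξ 0 1 - star (ξ 0 1) * ξ 0 0) +
           ↑(p 1) * (star (ξ 1 0) * ξ 1 1 - star (ξ 1 1) * ξ 1 0) +
           ↑(p 2) * (star (ξ 2 0) * ξ 2 1 - star (ξ 2 1) * ξ 2 0) +
           ↑(p 3) * (star (ξ 3 0) * ξ 3 1 - star (ξ 3 1) * ξ 3 0))
        - ((L 0 1 - L 1 0)/2 + (star (L 0 1) - star (L 1 0))/2) *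
          (↑(k 0) * (star (ξ 0 0) * ξ 0 1 - star (ξ 0 1) * ξ 0 0) +
           ↑(k 1) * (star (ξ 1 0) * ξ 1 1 - star (ξ 1 1) * ξ 1 0) +
           ↑(k 2) * (star (ξ 2 0) * ξ 2 1 - star (ξ 2 1) * ξ 2 0) +
           ↑(k 3) * (star (ξ 3 0) * ξ 3 1 - star (ξ 3 1) * ξ 3 0))) * Complex.I_sq
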